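/- Let γ > 0, δ > 0, σ > 0, and set α² = γ²·coth δ and β² = γ⁻²·coth δ. Then for all t, ω ∈ ℝ, (1/(2π))·∫_ℝ e^{−iωs}·σ²·Q_{2δ}^{(γ)}(t + s/2, t − s/2) ds = (σ²/(2π cosh δ))·exp(−t²/α² − ω²/β²), where Q_{2δ}^{(γ)}(x,y) = (γ·√(2π sinh 2δ))^{−1}·exp{−(1/(4γ²))·[coth δ·(x−y)² + tanh δ·(x+y)²]}. -/

import Mathlib

open Real MeasureTheory Complex

/-- The Mehler kernel of the operator `P_{2δ}^{(γ)}`: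
`Q_{2δ}^{(γ)}(x,y) = (γ·√(2π sinh 2δ))⁻¹·exp{−(1/(4γ²))·[coth δ·(x−y)² + tanh δ·(x+y)²]}`. -/
noncomputable def mehlerQtwo (γ δ x y : ℝ) : ℝ :=
  (γ * Real.sqrt (2 * π * Real.sinh (2 * δ)))⁻¹ *
    Real.exp (-(1 / (4 * γ ^ 2)) *
      ((Real.cosh δ / Real.sinh δ) * (x - y) ^ 2 + Real.tanh δ * (x + y) ^ 2))

/-- Appendix A of the paper (equation (7)): the Wigner–Ville spectrum of the white Gaussian
noise response of the time–frequency localization filter. With autocorrelation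
`r(t₁,t₂) = σ²·Q_{2δ}^{(γ)}(t₁,t₂)` and `α² = γ²·coth δ`, `β² = γ⁻²·coth δ`,
`(1/(2π))·∫_ℝ e^{−iωs}·r(t+s/2, t−s/2) ds = (σ²/(2π cosh δ))·exp(−t²/α² − ω²/β²)`. -/
theorem wigner_ville_spectrum (γ δ σ : ℝ) (hγ : 0 < γ) (hδ : 0 < δ) (hσ : 0 < σ)
    (α β : ℝ)
    (hα : α ^ 2 = γ ^ 2 * (Real.cosh δ / Real.sinh δ))
    (hβ : β ^ 2 = γ⁻¹ ^ 2 * (Real.cosh δ / Real.sinh δ)) (t ω : ℝ) :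
    (1 / (2 * (π : ℂ))) * ∫ s : ℝ,
        Complex.exp (-Complex.I * (ω : ℂ) * (s : ℂ)) *
          ((σ ^ 2 * mehlerQtwo γ δ (t + s / 2) (t - s / 2) : ℝ) : ℂ) =
      (((σ ^ 2 / (2 * π * Real.cosh δ)) *
          Real.exp (-(t ^ 2) / α ^ 2 - ω ^ 2 / β ^ 2) : ℝ) : ℂ) := by
  have hs : 0 < Real.sinh δ := Real.sinh_pos_iff.mpr hδ
  have hc : 0 < Real.cosh δ := Real.cosh_pos δ
  have hs2 : 0 < Real.sinh (2 * δ) := Real.sinh_pos_iff.mpr (by linarith)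
  have hπ : (0 : ℝ) < π := Real.pi_pos
  set b : ℝ := Real.cosh δ / Real.sinh δ / (4 * γ ^ 2) with hb_def
  have hb : 0 < b := by positivity
  set K : ℝ := σ ^ 2 * (γ * Real.sqrt (2 * π * Real.sinh (2 * δ)))⁻¹ *
      Real.exp (-(Real.tanh δ * t ^ 2 / γ ^ 2)) with hK_def
  have hint : ∀ s : ℝ,
      Complex.exp (-Complex.I * (ω : ℂ) * (s : ℂ)) *
          ((σ ^ 2 * mehlerQtwo γ δ (t + s / 2) (t - s / 2) : ℝ) : ℂ)
        = (K : ℂ) * (Complex.exp (Complex.I * (-ω : ℂ) * (s : ℂ)) *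
            Complex.exp (-(b : ℂ) * (s : ℂ) ^ 2)) := by
    intro s
    have h1 : mehlerQtwo γ δ (t + s / 2) (t - s / 2)
        = (γ * Real.sqrt (2 * π * Real.sinh (2 * δ)))⁻¹ *
          (Real.exp (-(Real.tanh δ * t ^ 2 / γ ^ 2)) * Real.exp (-(b * s ^ 2))) := by
      rw [mehlerQtwo, ← Real.exp_add]
      congr 1
      rw [hb_def]
      field_simp [hb_def]
      ring
    rw [h1, hK_def]
    push_cast
    ring_nf
  rw [integral_congr_ae (Filter.Eventually.of_forall hint), MeasureTheory.integral_const_mul,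
    fourierIntegral_gaussian (by simpa using hb) (-ω : ℂ)]
  have hsqrt : ((π : ℂ) / (b : ℂ)) ^ (1 / 2 : ℂ) = ((Real.sqrt (π / b) : ℝ) : ℂ) := by
    rw [Real.sqrt_eq_rpow, Complex.ofReal_cpow (by positivity) (1 / 2 : ℝ)]
    push_cast
    ring_nf
  have hexp : Complex.exp (-(-ω : ℂ) ^ 2 / (4 * (b : ℂ)))
      = ((Real.exp (-(ω ^ 2) / (4 * b)) : ℝ) : ℂ) := by
    rw [Complex.ofReal_exp]
    push_cast
    ring_nf
  rw [hsqrt, hexp]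
  rw [show (1 / (2 * (π : ℂ))) = (((1 / (2 * π) : ℝ)) : ℂ) by push_cast; ring]
  rw [← Complex.ofReal_mul, ← Complex.ofReal_mul, ← Complex.ofReal_mul, Complex.ofReal_inj]
  -- now a purely real identity
  have hKc : (γ * Real.sqrt (2 * π * Real.sinh (2 * δ)))⁻¹ * Real.sqrt (π / b)
      = 1 / Real.cosh δ := by
    have hsq : Real.sqrt (2 * π * Real.sinh (2 * δ)) ^ 2 = 2 * π * Real.sinh (2 * δ) :=
      Real.sq_sqrt (by positivity)
    have h2δ : Real.sinh (2 * δ) = 2 * Real.sinh δ * Real.cosh δ := by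
      rw [Real.sinh_two_mul]
    have h2 : Real.sqrt (π / b) = γ * Real.sqrt (2 * π * Real.sinh (2 * δ)) / Real.cosh δ := by
      rw [show γ * Real.sqrt (2 * π * Real.sinh (2 * δ)) / Real.cosh δ
          = Real.sqrt ((γ * Real.sqrt (2 * π * Real.sinh (2 * δ)) / Real.cosh δ) ^ 2) from
        (Real.sqrt_sq (by positivity)).symm]
      congr 1
      rw [show (γ * Real.sqrt (2 * π * Real.sinh (2 * δ)) / Real.cosh δ) ^ 2
          = γ ^ 2 * Real.sqrt (2 * π * Real.sinh (2 * δ)) ^ 2 / Real.cosh δ ^ 2 from by ring,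
        hsq, h2δ, hb_def]
      field_simp
      ring
    rw [h2]
    field_simp
  have hexp1 : -(Real.tanh δ * t ^ 2 / γ ^ 2) = -(t ^ 2) / α ^ 2 := by
    rw [hα, Real.tanh_eq_sinh_div_cosh]
    field_simp
  have hexp2 : -(ω ^ 2) / (4 * b) = -(ω ^ 2) / β ^ 2 := by
    rw [hβ, hb_def]
    field_simp
  rw [hK_def, hexp1, hexp2]
  rw [show -(t ^ 2) / α ^ 2 - ω ^ 2 / β ^ 2 = -(t ^ 2) / α ^ 2 + -(ω ^ 2) / β ^ 2 from by ring,
    Real.exp_add]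
  linear_combination (1 / (2 * π) * σ ^ 2 * Real.exp (-(t ^ 2) / α ^ 2) *
    Real.exp (-(ω ^ 2) / β ^ 2)) * hKc
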